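/- arXiv:2301.08672 — 2 statements merged into one kernel-verified Lean document; each statement's English description precedes it below -/
import Mathlib

section
/- Let L be a regular-epi localization functor on XMod, let 1 → N →(κ) T →(α) Q → 1 be an L-flat short exact sequence of crossed modules, and let g : Q' → Q be any morphism of crossed modules. Then the pullback sequence 1 → N → T ×_Q Q' → Q' → 1 admits a fiberwise localization. -/
set_option linter.unusedVariables false

/-- A crossed module of groups `(M, G, d)` with `G` acting on `M`. -/
structure XMod : Type 1 where
  M : Type
  G : Type
  [grpM : Group M]
  [grpG : Group G]
  act : G →* MulAut M
  d : M →* G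
  act_d : ∀ (b : G) (t : M), d (act b t) = b * d t * b⁻¹
  peiffer : ∀ (t s : M), act (d t) s = t * s * t⁻¹

attribute [instance] XMod.grpM XMod.grpG

/-- A morphism of crossed modules. -/
structure XModHom (N T : XMod) where
  f1 : N.M →* T.M
  f2 : N.G →* T.G
  comm_d : ∀ n, T.d (f1 n) = f2 (N.d n)
  equiv : ∀ (b : N.G) (n : N.M), f1 (N.act b n) = T.act (f2 b) (f1 n)

namespace XModHom

theorem ext {N T : XMod} {f g : XModHom N T} (h1 : f.f1 = g.f1) (h2 : f.f2 = g.f2) :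
    f = g := by
  cases f; cases g; cases h1; cases h2; rfl

/-- The identity morphism. -/
def id (T : XMod) : XModHom T T :=
  ⟨MonoidHom.id _, MonoidHom.id _, fun _ => rfl, fun _ _ => rfl⟩

/-- Composition of morphisms of crossed modules. -/
def comp {A B C : XMod} (g : XModHom B C) (f : XModHom A B) : XModHom A C where
  f1 := g.f1.comp f.f1
  f2 := g.f2.comp f.f2
  comm_d := by intro n; simp [MonoidHom.comp_apply, g.comm_d, f.comm_d]
  equiv := by intro b n; simp [MonoidHom.comp_apply, f.equiv, g.equiv]

/-- The trivial morphism of crossed modules. -/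
def triv (A B : XMod) : XModHom A B where
  f1 := 1
  f2 := 1
  comm_d := by intro n; simp
  equiv := by intro b n; simp

/-- A morphism of crossed modules is an isomorphism if it has a two-sided inverse. -/
def IsIso {A B : XMod} (f : XModHom A B) : Prop :=
  ∃ g : XModHom B A, comp g f = id A ∧ comp f g = id B

/-- Regular epimorphisms of crossed modules are exactly the componentwise
surjective morphisms. -/
def RegEpi {A B : XMod} (f : XModHom A B) : Prop :=
  Function.Surjective f.f1 ∧ Function.Surjective f.f2

/-- `κ` is a kernel of `α` (in the categorical sense). -/
def IsKernelOf {N T Q : XMod} (κ : XModHom N T) (α : XModHom T Q) : Prop :=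
  comp α κ = triv N Q ∧
    ∀ (X : XMod) (u : XModHom X T), comp α u = triv X Q →
      ∃! v : XModHom X N, comp κ v = u

end XModHom

/-- `1 → N → T → Q → 1` is a short exact sequence of crossed modules. -/
def ShortExact {N T Q : XMod} (κ : XModHom N T) (α : XModHom T Q) : Prop :=
  XModHom.IsKernelOf κ α ∧ XModHom.RegEpi α
/-- A localization functor (coaugmented idempotent functor) on `XMod`. -/
structure LocalizationFunctor where
  obj : XMod → XMod
  map : ∀ {A B : XMod}, XModHom A B → XModHom (obj A) (obj B)
  map_id : ∀ A : XMod, map (XModHom.id A) = XModHom.id (obj A)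
  map_comp : ∀ {A B C : XMod} (f : XModHom A B) (g : XModHom B C),
    map (XModHom.comp g f) = XModHom.comp (map g) (map f)
  ell : ∀ A : XMod, XModHom A (obj A)
  natural : ∀ {A B : XMod} (f : XModHom A B),
    XModHom.comp (ell B) f = XModHom.comp (map f) (ell A)
  iso_ell_obj : ∀ A : XMod, XModHom.IsIso (ell (obj A))
  iso_map_ell : ∀ A : XMod, XModHom.IsIso (map (ell A))

namespace LocalizationFunctor

/-- A crossed module is `L`-local if its coaugmentation is an isomorphism. -/
def IsLocal (L : LocalizationFunctor) (X : XMod) : Prop :=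
  XModHom.IsIso (L.ell X)

/-- `L` is a regular-epi localization if every coaugmentation morphism is a
regular epimorphism. -/
def RegEpiLoc (L : LocalizationFunctor) : Prop :=
  ∀ X : XMod, XModHom.RegEpi (L.ell X)

/-- A short exact sequence is `L`-flat if applying `L` yields a short exact sequence. -/
def LFlat (L : LocalizationFunctor) {N T Q : XMod} (κ : XModHom N T) (α : XModHom T Q) : Prop :=
  ShortExact (L.map κ) (L.map α)

end LocalizationFunctor
section Pullback

variable {T Q Q' : XMod} (α : XModHom T Q) (g : XModHom Q' Q)

/-- Level-1 part of the pullback `T ×_Q Q'`, computed componentwise. -/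
def pbM : Subgroup (T.M × Q'.M) where
  carrier := {p | α.f1 p.1 = g.f1 p.2}
  one_mem' := by simp
  mul_mem' := by
    intro a b ha hb
    simp only [Set.mem_setOf_eq, Prod.fst_mul, Prod.snd_mul, map_mul] at *
    rw [ha, hb]
  inv_mem' := by
    intro a ha
    simp only [Set.mem_setOf_eq, Prod.fst_inv, Prod.snd_inv, map_inv] at *
    rw [ha]

/-- Level-2 part of the pullback `T ×_Q Q'`, computed componentwise. -/
def pbG : Subgroup (T.G × Q'.G) where
  carrier := {p | α.f2 p.1 = g.f2 p.2}
  one_mem' := by simp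
  mul_mem' := by
    intro a b ha hb
    simp only [Set.mem_setOf_eq, Prod.fst_mul, Prod.snd_mul, map_mul] at *
    rw [ha, hb]
  inv_mem' := by
    intro a ha
    simp only [Set.mem_setOf_eq, Prod.fst_inv, Prod.snd_inv, map_inv] at *
    rw [ha]

theorem mem_pbM_iff (p : T.M × Q'.M) : p ∈ pbM α g ↔ α.f1 p.1 = g.f1 p.2 := Iff.rfl

theorem mem_pbG_iff (p : T.G × Q'.G) : p ∈ pbG α g ↔ α.f2 p.1 = g.f2 p.2 := Iff.rfl

theorem pb_act_mem {b : T.G × Q'.G} (hb : b ∈ pbG α g) {p : T.M × Q'.M}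
    (hp : p ∈ pbM α g) : (T.act b.1 p.1, Q'.act b.2 p.2) ∈ pbM α g := by
  have hb' : α.f2 b.1 = g.f2 b.2 := hb
  have hp' : α.f1 p.1 = g.f1 p.2 := hp
  show α.f1 (T.act b.1 p.1) = g.f1 (Q'.act b.2 p.2)
  rw [α.equiv, g.equiv, hb', hp']

theorem XMod.act_inv_act (X : XMod) (b : X.G) (t : X.M) :
    X.act b⁻¹ (X.act b t) = t := by
  rw [← MulAut.mul_apply, ← map_mul, inv_mul_cancel, map_one, MulAut.one_apply]

theorem XMod.act_act_inv (X : XMod) (b : X.G) (t : X.M) :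
    X.act b (X.act b⁻¹ t) = t := by
  rw [← MulAut.mul_apply, ← map_mul, mul_inv_cancel, map_one, MulAut.one_apply]

/-- The action of an element of the pullback on the level-1 part, as a group
automorphism. -/
def pbActEquiv (b : ↥(pbG α g)) : ↥(pbM α g) ≃* ↥(pbM α g) where
  toFun p := ⟨(T.act b.1.1 p.1.1, Q'.act b.1.2 p.1.2), pb_act_mem α g b.2 p.2⟩
  invFun p := ⟨(T.act b.1.1⁻¹ p.1.1, Q'.act b.1.2⁻¹ p.1.2),
    pb_act_mem α g ((pbG α g).inv_mem b.2) p.2⟩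
  left_inv p := by
    apply Subtype.ext
    exact Prod.ext (T.act_inv_act _ _) (Q'.act_inv_act _ _)
  right_inv p := by
    apply Subtype.ext
    exact Prod.ext (T.act_act_inv _ _) (Q'.act_act_inv _ _)
  map_mul' p q := by
    apply Subtype.ext
    exact Prod.ext (map_mul _ _ _) (map_mul _ _ _)

/-- The pullback `T ×_Q Q'` of `α : T → Q` along `g : Q' → Q`, computed
componentwise. -/
def pbXMod : XMod where
  M := ↥(pbM α g)
  G := ↥(pbG α g)
  act :=
    { toFun := pbActEquiv α g
      map_one' := by
        apply MulEquiv.ext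
        intro p
        apply Subtype.ext
        apply Prod.ext
        · show T.act (1 : ↥(pbG α g)).1.1 p.1.1 = p.1.1
          simp
        · show Q'.act (1 : ↥(pbG α g)).1.2 p.1.2 = p.1.2
          simp
      map_mul' := by
        intro b c
        apply MulEquiv.ext
        intro p
        apply Subtype.ext
        apply Prod.ext
        · show T.act (b * c).1.1 p.1.1 = T.act b.1.1 (T.act c.1.1 p.1.1)
          simp [map_mul]
        · show Q'.act (b * c).1.2 p.1.2 = Q'.act b.1.2 (Q'.act c.1.2 p.1.2)
          simp [map_mul] }
  d :=
    { toFun := fun p => ⟨(T.d p.1.1, Q'.d p.1.2), by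
        have hp : α.f1 p.1.1 = g.f1 p.1.2 := p.2
        show α.f2 (T.d p.1.1) = g.f2 (Q'.d p.1.2)
        rw [← α.comm_d, ← g.comm_d, hp]⟩
      map_one' := by
        apply Subtype.ext
        apply Prod.ext <;> simp
      map_mul' := by
        intro p q
        apply Subtype.ext
        apply Prod.ext <;> simp }
  act_d := by
    intro b p
    apply Subtype.ext
    apply Prod.ext
    · exact T.act_d _ _
    · exact Q'.act_d _ _
  peiffer := by
    intro p q
    apply Subtype.ext
    apply Prod.ext
    · exact T.peiffer _ _
    · exact Q'.peiffer _ _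

/-- First projection of the pullback. -/
def pbFst : XModHom (pbXMod α g) T where
  f1 := (MonoidHom.fst T.M Q'.M).comp (pbM α g).subtype
  f2 := (MonoidHom.fst T.G Q'.G).comp (pbG α g).subtype
  comm_d := fun _ => rfl
  equiv := fun _ _ => rfl

/-- Second projection of the pullback. -/
def pbSnd : XModHom (pbXMod α g) Q' where
  f1 := (MonoidHom.snd T.M Q'.M).comp (pbM α g).subtype
  f2 := (MonoidHom.snd T.G Q'.G).comp (pbG α g).subtype
  comm_d := fun _ => rfl
  equiv := fun _ _ => rfl

end Pullback
section PullbackMaps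

variable {N T Q Q' : XMod}

/-- The induced morphism from the kernel `N` into the pullback `T ×_Q Q'`. -/
def pbIn (κ : XModHom N T) (α : XModHom T Q) (g : XModHom Q' Q)
    (h : XModHom.comp α κ = XModHom.triv N Q) : XModHom N (pbXMod α g) where
  f1 :=
    { toFun := fun n => ⟨(κ.f1 n, 1), by
        show α.f1 (κ.f1 n) = g.f1 1
        have := congrArg XModHom.f1 h
        have h' : α.f1 (κ.f1 n) = 1 := DFunLike.congr_fun this n
        rw [h', map_one]⟩
      map_one' := by
        apply Subtype.ext
        apply Prod.ext <;> (try simp) <;> first | rfl | exact map_one _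
      map_mul' := by
        intro a b
        apply Subtype.ext
        show (κ.f1 (a * b), (1 : Q'.M)) = (κ.f1 a, (1 : Q'.M)) * (κ.f1 b, (1 : Q'.M))
        simp [Prod.ext_iff, map_mul] }
  f2 :=
    { toFun := fun n => ⟨(κ.f2 n, 1), by
        show α.f2 (κ.f2 n) = g.f2 1
        have := congrArg XModHom.f2 h
        have h' : α.f2 (κ.f2 n) = 1 := DFunLike.congr_fun this n
        rw [h', map_one]⟩
      map_one' := by
        apply Subtype.ext
        apply Prod.ext <;> (try simp) <;> first | rfl | exact map_one _
      map_mul' := by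
        intro a b
        apply Subtype.ext
        show (κ.f2 (a * b), (1 : Q'.G)) = (κ.f2 a, (1 : Q'.G)) * (κ.f2 b, (1 : Q'.G))
        simp [Prod.ext_iff, map_mul] }
  comm_d := by
    intro n
    apply Subtype.ext
    apply Prod.ext
    · exact κ.comm_d n
    · show Q'.d (1 : Q'.M) = 1
      simp
  equiv := by
    intro b n
    apply Subtype.ext
    apply Prod.ext
    · exact κ.equiv b n
    · show (1 : Q'.M) = Q'.act 1 1
      simp

/-- The induced morphism into the pullback `T ×_Q Q'` from an object mapping
trivially to `Q` through the second leg. -/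
def pbInR (α : XModHom T Q) (g : XModHom Q' Q) {X : XMod} (u : XModHom X Q')
    (h : XModHom.comp g u = XModHom.triv X Q) : XModHom X (pbXMod α g) where
  f1 :=
    { toFun := fun n => ⟨(1, u.f1 n), by
        show α.f1 1 = g.f1 (u.f1 n)
        have := congrArg XModHom.f1 h
        have h' : g.f1 (u.f1 n) = 1 := DFunLike.congr_fun this n
        rw [h', map_one]⟩
      map_one' := by
        apply Subtype.ext
        apply Prod.ext <;> (try simp) <;> first | rfl | exact map_one _
      map_mul' := by
        intro a b
        apply Subtype.ext
        show ((1 : T.M), u.f1 (a * b)) = ((1 : T.M), u.f1 a) * ((1 : T.M), u.f1 b)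
        simp [Prod.ext_iff, map_mul] }
  f2 :=
    { toFun := fun n => ⟨(1, u.f2 n), by
        show α.f2 1 = g.f2 (u.f2 n)
        have := congrArg XModHom.f2 h
        have h' : g.f2 (u.f2 n) = 1 := DFunLike.congr_fun this n
        rw [h', map_one]⟩
      map_one' := by
        apply Subtype.ext
        apply Prod.ext <;> (try simp) <;> first | rfl | exact map_one _
      map_mul' := by
        intro a b
        apply Subtype.ext
        show ((1 : T.G), u.f2 (a * b)) = ((1 : T.G), u.f2 a) * ((1 : T.G), u.f2 b)
        simp [Prod.ext_iff, map_mul] }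
  comm_d := by
    intro n
    apply Subtype.ext
    apply Prod.ext
    · show T.d (1 : T.M) = 1
      simp
    · exact u.comm_d n
  equiv := by
    intro b n
    apply Subtype.ext
    apply Prod.ext
    · show (1 : T.M) = T.act 1 1
      simp
    · exact u.equiv b n

/-- The morphism of pullbacks `T ×_Q Q' → E ×_Q Q'` induced by `f : T → E`
with `p ∘ f = α`. -/
def pbMapL {E : XMod} (α : XModHom T Q) (p : XModHom E Q) (g : XModHom Q' Q)
    (f : XModHom T E) (hpf : XModHom.comp p f = α) :
    XModHom (pbXMod α g) (pbXMod p g) where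
  f1 :=
    { toFun := fun w => ⟨(f.f1 w.1.1, w.1.2), by
        show p.f1 (f.f1 w.1.1) = g.f1 w.1.2
        have h' : p.f1 (f.f1 w.1.1) = α.f1 w.1.1 :=
          DFunLike.congr_fun (congrArg XModHom.f1 hpf) w.1.1
        rw [h']
        exact w.2⟩
      map_one' := by
        apply Subtype.ext
        apply Prod.ext <;> (try simp) <;> first | rfl | exact map_one _
      map_mul' := by
        intro a b
        apply Subtype.ext
        apply Prod.ext
        · exact map_mul f.f1 a.1.1 b.1.1
        · rfl }
  f2 :=
    { toFun := fun w => ⟨(f.f2 w.1.1, w.1.2), by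
        show p.f2 (f.f2 w.1.1) = g.f2 w.1.2
        have h' : p.f2 (f.f2 w.1.1) = α.f2 w.1.1 :=
          DFunLike.congr_fun (congrArg XModHom.f2 hpf) w.1.1
        rw [h']
        exact w.2⟩
      map_one' := by
        apply Subtype.ext
        apply Prod.ext <;> (try simp) <;> first | rfl | exact map_one _
      map_mul' := by
        intro a b
        apply Subtype.ext
        apply Prod.ext
        · exact map_mul f.f2 a.1.1 b.1.1
        · rfl }
  comm_d := by
    intro w
    apply Subtype.ext
    apply Prod.ext
    · exact f.comm_d _
    · rfl
  equiv := by
    intro b w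
    apply Subtype.ext
    apply Prod.ext
    · exact f.equiv _ _
    · rfl

end PullbackMaps

/-- A commuting square is a pullback square (categorical definition). -/
def IsPullbackSquare {P X Y Z : XMod} (p1 : XModHom P X) (p2 : XModHom P Y)
    (f : XModHom X Z) (h : XModHom Y Z) : Prop :=
  XModHom.comp f p1 = XModHom.comp h p2 ∧
    ∀ (W : XMod) (u : XModHom W X) (v : XModHom W Y),
      XModHom.comp f u = XModHom.comp h v →
        ∃! w : XModHom W P, XModHom.comp p1 w = u ∧ XModHom.comp p2 w = v

namespace LocalizationFunctor

/-- `L` is admissible for the class of regular epimorphisms: applying `L` to the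
pullback of a regular epimorphism `α : LT → LQ` along the coaugmentation
`ℓ^Q : Q → LQ` yields again a pullback square. -/
def Admissible (L : LocalizationFunctor) : Prop :=
  ∀ (T Q : XMod) (α : XModHom (L.obj T) (L.obj Q)), XModHom.RegEpi α →
    IsPullbackSquare (L.map (pbFst α (L.ell Q))) (L.map (pbSnd α (L.ell Q)))
      (L.map α) (L.map (L.ell Q))

/-- `L` is conditionally flat: the pullback of any `L`-flat short exact sequence
along any morphism is again `L`-flat. -/
def ConditionallyFlat (L : LocalizationFunctor) : Prop :=
  ∀ (N T Q : XMod) (κ : XModHom N T) (α : XModHom T Q) (hse : ShortExact κ α),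
    L.LFlat κ α →
      ∀ (Q' : XMod) (g : XModHom Q' Q),
        L.LFlat (pbIn κ α g hse.1.1) (pbSnd α g)

/-- A short exact sequence `1 → N → T → Q → 1` admits a fiberwise localization:
there is a short exact sequence `1 → LN → E → Q → 1` together with an
`L`-equivalence `T → E` compatible with the coaugmentation of `N`. -/
def AdmitsFiberwise (L : LocalizationFunctor) {N T Q : XMod} (κ : XModHom N T)
    (α : XModHom T Q) : Prop :=
  ∃ (E : XMod) (j : XModHom (L.obj N) E) (p : XModHom E Q) (e : XModHom T E),
    ShortExact j p ∧ XModHom.IsIso (L.map e) ∧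
      XModHom.comp e κ = XModHom.comp j (L.ell N) ∧ XModHom.comp p e = α

end LocalizationFunctor
section Kernel

variable {N T : XMod} (f : XModHom N T)

theorem ker_act_mem {b : N.G} (hb : b ∈ f.f2.ker) {n : N.M} (hn : n ∈ f.f1.ker) :
    N.act b n ∈ f.f1.ker := by
  have hb' : f.f2 b = 1 := hb
  have hn' : f.f1 n = 1 := hn
  show f.f1 (N.act b n) = 1
  rw [f.equiv, hb', hn', map_one]

/-- The automorphism of `ker f.f1` induced by an element of `ker f.f2`. -/
def kerActEquiv (b : ↥f.f2.ker) : ↥f.f1.ker ≃* ↥f.f1.ker where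
  toFun n := ⟨N.act b.1 n.1, ker_act_mem f b.2 n.2⟩
  invFun n := ⟨N.act b.1⁻¹ n.1, ker_act_mem f (f.f2.ker.inv_mem b.2) n.2⟩
  left_inv n := Subtype.ext (N.act_inv_act _ _)
  right_inv n := Subtype.ext (N.act_act_inv _ _)
  map_mul' n m := Subtype.ext (map_mul _ _ _)

/-- The kernel of a morphism of crossed modules, computed componentwise. -/
def kerXMod : XMod where
  M := ↥f.f1.ker
  G := ↥f.f2.ker
  act :=
    { toFun := kerActEquiv f
      map_one' := by
        apply MulEquiv.ext
        intro n
        apply Subtype.ext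
        show N.act (1 : ↥f.f2.ker).1 n.1 = n.1
        simp
      map_mul' := by
        intro b c
        apply MulEquiv.ext
        intro n
        apply Subtype.ext
        show N.act (b * c).1 n.1 = N.act b.1 (N.act c.1 n.1)
        simp [map_mul] }
  d :=
    { toFun := fun n => ⟨N.d n.1, by
        have hn : f.f1 n.1 = 1 := n.2
        show f.f2 (N.d n.1) = 1
        rw [← f.comm_d, hn, map_one]⟩
      map_one' := by
        apply Subtype.ext
        simp
      map_mul' := by
        intro a b
        apply Subtype.ext
        show N.d (a * b).1 = N.d a.1 * N.d b.1
        simp }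
  act_d := by
    intro b n
    apply Subtype.ext
    exact N.act_d _ _
  peiffer := by
    intro n m
    apply Subtype.ext
    exact N.peiffer _ _

/-- The inclusion of the kernel. -/
def kerIncl : XModHom (kerXMod f) N where
  f1 := f.f1.ker.subtype
  f2 := f.f2.ker.subtype
  comm_d := fun _ => rfl
  equiv := fun _ _ => rfl

end Kernel

/-- A crossed module is trivial if both underlying groups are trivial. -/
def XMod.IsTrivial (X : XMod) : Prop :=
  (∀ m : X.M, m = 1) ∧ ∀ b : X.G, b = 1

/-- `X` is `A`-null if the only morphism of crossed modules `A → X` is the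
trivial one. -/
def ANull (A X : XMod) : Prop :=
  ∀ φ : XModHom A X, φ = XModHom.triv A X

/-- `X` is `f`-local if precomposition with `f` is a bijection on morphisms
into `X`. -/
def FLocal {B C : XMod} (f : XModHom B C) (X : XMod) : Prop :=
  Function.Bijective fun φ : XModHom C X => XModHom.comp φ f

/-- The subgroup `[N₂, N₁]` of `N₁` generated by the elements `ᵇt·t⁻¹`. -/
def actCommutator (N : XMod) : Subgroup N.M :=
  Subgroup.closure {x | ∃ (b : N.G) (t : N.M), x = N.act b t * t⁻¹}

section NormalClosure

variable {A W : XMod} (φ : XModHom A W)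

/-- The level-2 part of the normal closure of the image of `φ`:
the normal closure of `φ₂(A₂)` in `W₂`. -/
def ncl2 : Subgroup W.G :=
  Subgroup.normalClosure (Set.range φ.f2)

/-- The level-1 part of the normal closure of the image of `φ`:
the subgroup `φ₁(A₁)^{W₂}·[φ₂(A₂)^{W₂}, W₁]` of `W₁`. -/
def ncl1 : Subgroup W.M :=
  Subgroup.closure
    ({x | ∃ (b : W.G) (m : A.M), x = W.act b (φ.f1 m)} ∪
      {x | ∃ s ∈ ncl2 φ, ∃ w : W.M, x = W.act s w * w⁻¹})

end NormalClosure


section Aux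

namespace XModHom

theorem comp_assoc {A B C D : XMod} (h : XModHom C D) (g : XModHom B C) (f : XModHom A B) :
    comp (comp h g) f = comp h (comp g f) :=
  ext rfl rfl

theorem comp_id {A B : XMod} (f : XModHom A B) : comp f (id A) = f :=
  ext (MonoidHom.comp_id _) (MonoidHom.comp_id _)

theorem id_comp {A B : XMod} (f : XModHom A B) : comp (id B) f = f :=
  ext (MonoidHom.id_comp _) (MonoidHom.id_comp _)

theorem f1_apply_congr {A B : XMod} {f h : XModHom A B} (e : f = h) (x : A.M) :
    f.f1 x = h.f1 x := by rw [e]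

theorem f2_apply_congr {A B : XMod} {f h : XModHom A B} (e : f = h) (x : A.G) :
    f.f2 x = h.f2 x := by rw [e]

theorem comp_f1 {A B C : XMod} (g : XModHom B C) (f : XModHom A B) (x : A.M) :
    (comp g f).f1 x = g.f1 (f.f1 x) := rfl

theorem comp_f2 {A B C : XMod} (g : XModHom B C) (f : XModHom A B) (x : A.G) :
    (comp g f).f2 x = g.f2 (f.f2 x) := rfl

theorem comp_triv {A B C : XMod} (f : XModHom B C) :
    comp f (triv A B) = triv A C := by
  apply ext
  · apply MonoidHom.ext; intro x
    show f.f1 1 = 1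
    simp
  · apply MonoidHom.ext; intro x
    show f.f2 1 = 1
    simp

theorem cancel_of_regEpi {A B C : XMod} {e : XModHom A B} (he : RegEpi e)
    {u v : XModHom B C} (h : comp u e = comp v e) : u = v := by
  apply ext
  · apply MonoidHom.ext; intro y
    obtain ⟨x, rfl⟩ := he.1 y
    exact f1_apply_congr h x
  · apply MonoidHom.ext; intro y
    obtain ⟨x, rfl⟩ := he.2 y
    exact f2_apply_congr h x

theorem cancel_iso_right {A B C : XMod} {i : XModHom A B} (hi : IsIso i)
    {u v : XModHom B C} (h : comp u i = comp v i) : u = v := by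
  obtain ⟨k, hk1, hk2⟩ := hi
  have h2 := congrArg (fun w => comp w k) h
  simpa only [comp_assoc, hk2, comp_id] using h2

theorem cancel_iso_left {A B C : XMod} {i : XModHom B C} (hi : IsIso i)
    {u v : XModHom A B} (h : comp i u = comp i v) : u = v := by
  obtain ⟨k, hk1, hk2⟩ := hi
  have h2 := congrArg (fun w => comp k w) h
  simpa only [← comp_assoc, hk1, id_comp] using h2

end XModHom

/-- Factorization of a morphism into a local object through the coaugmentation. -/
theorem exists_factor (L : LocalizationFunctor) {A C : XMod} (φ : XModHom A (L.obj C)) :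
    ∃ ψ : XModHom (L.obj A) (L.obj C), XModHom.comp ψ (L.ell A) = φ := by
  obtain ⟨inv, hinv1, hinv2⟩ := L.iso_ell_obj C
  refine ⟨XModHom.comp inv (L.map φ), ?_⟩
  rw [XModHom.comp_assoc, ← L.natural φ, ← XModHom.comp_assoc, hinv1, XModHom.id_comp]

theorem eq_of_comp_ell (L : LocalizationFunctor) {A C : XMod}
    {ψ ψ' : XModHom (L.obj A) (L.obj C)}
    (h : XModHom.comp ψ (L.ell A) = XModHom.comp ψ' (L.ell A)) : ψ = ψ' := by
  have h2 : XModHom.comp (L.map ψ) (L.map (L.ell A))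
      = XModHom.comp (L.map ψ') (L.map (L.ell A)) := by
    rw [← L.map_comp, ← L.map_comp, h]
  have h3 : L.map ψ = L.map ψ' := XModHom.cancel_iso_right (L.iso_map_ell A) h2
  have h4 : XModHom.comp (L.ell (L.obj C)) ψ = XModHom.comp (L.ell (L.obj C)) ψ' := by
    rw [L.natural ψ, L.natural ψ', h3]
  exact XModHom.cancel_iso_left (L.iso_ell_obj C) h4

/-- Lifting a morphism along a componentwise-surjective morphism which it kills
the kernel of. -/
theorem lift_of_surjective {A B C : XMod} (e : XModHom A B)
    (he1 : Function.Surjective e.f1) (he2 : Function.Surjective e.f2)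
    (φ : XModHom A C) (h1 : e.f1.ker ≤ φ.f1.ker) (h2 : e.f2.ker ≤ φ.f2.ker) :
    ∃ ψ : XModHom B C, XModHom.comp ψ e = φ := by
  set ψ1 : B.M →* C.M := e.f1.liftOfSurjective he1 ⟨φ.f1, h1⟩ with hψ1
  set ψ2 : B.G →* C.G := e.f2.liftOfSurjective he2 ⟨φ.f2, h2⟩ with hψ2
  have key1 : ∀ x : A.M, ψ1 (e.f1 x) = φ.f1 x := fun x =>
    e.f1.liftOfRightInverse_comp_apply _ _ ⟨φ.f1, h1⟩ x
  have key2 : ∀ x : A.G, ψ2 (e.f2 x) = φ.f2 x := fun x =>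
    e.f2.liftOfRightInverse_comp_apply _ _ ⟨φ.f2, h2⟩ x
  refine ⟨⟨ψ1, ψ2, ?_, ?_⟩, ?_⟩
  · intro n
    obtain ⟨x, rfl⟩ := he1 n
    rw [key1, e.comm_d, key2, φ.comm_d]
  · intro b n
    obtain ⟨y, rfl⟩ := he2 b
    obtain ⟨x, rfl⟩ := he1 n
    rw [← e.equiv, key1, key1, key2, φ.equiv]
  · apply XModHom.ext
    · exact MonoidHom.ext key1
    · exact MonoidHom.ext key2

/-- The crossed module `(ℤ, ℤ, id)` with trivial action. -/
def zzXMod : XMod where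
  M := Multiplicative ℤ
  G := Multiplicative ℤ
  act := 1
  d := MonoidHom.id _
  act_d := by
    intro b t
    show t = b * t * b⁻¹
    rw [mul_comm b t, mul_inv_cancel_right]
  peiffer := by
    intro t s
    show s = t * s * t⁻¹
    rw [mul_comm t s, mul_inv_cancel_right]

/-- The crossed module `(ℤ, ℤ, 1)` with trivial action. -/
def zgXMod : XMod where
  M := Multiplicative ℤ
  G := Multiplicative ℤ
  act := 1
  d := 1
  act_d := by
    intro b t
    show (1 : Multiplicative ℤ) = b * 1 * b⁻¹
    simp
  peiffer := by
    intro t s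
    show s = t * s * t⁻¹
    rw [mul_comm t s, mul_inv_cancel_right]

theorem kernel_inj_f1 {N T Q : XMod} {κ : XModHom N T} {α : XModHom T Q}
    (hk : XModHom.IsKernelOf κ α) {n : N.M} (hn : κ.f1 n = 1) : n = 1 := by
  have hc : ∀ (k l : ℤ), N.act ((N.d n) ^ k) (n ^ l) = n ^ l := by
    intro k l
    rw [← map_zpow, N.peiffer]
    have hcom : Commute (n ^ k) (n ^ l) := (Commute.refl n).zpow_zpow k l
    rw [hcom.eq, mul_inv_cancel_right]
  set v : XModHom zzXMod N :=
    { f1 := zpowersHom N.M n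
      f2 := zpowersHom N.G (N.d n)
      comm_d := by
        intro m
        show N.d (n ^ (Multiplicative.toAdd m : ℤ)) = (N.d n) ^ (Multiplicative.toAdd m : ℤ)
        rw [map_zpow]
      equiv := by
        intro b m
        show n ^ (Multiplicative.toAdd m : ℤ)
          = N.act ((N.d n) ^ (Multiplicative.toAdd b : ℤ)) (n ^ (Multiplicative.toAdd m : ℤ))
        rw [hc] } with hv
  have hκv : XModHom.comp κ v = XModHom.triv zzXMod T := by
    apply XModHom.ext
    · apply MonoidHom.ext; intro m
      show κ.f1 (n ^ (Multiplicative.toAdd m : ℤ)) = 1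
      rw [map_zpow, hn, one_zpow]
    · apply MonoidHom.ext; intro m
      show κ.f2 ((N.d n) ^ (Multiplicative.toAdd m : ℤ)) = 1
      rw [map_zpow, ← κ.comm_d, hn, map_one, one_zpow]
  have hαtriv : XModHom.comp α (XModHom.triv zzXMod T) = XModHom.triv zzXMod Q :=
    XModHom.comp_triv α
  obtain ⟨w, hw, hwuniq⟩ := hk.2 zzXMod (XModHom.triv zzXMod T) hαtriv
  have h1 : v = w := hwuniq v hκv
  have h2 : XModHom.triv zzXMod N = w := hwuniq _ (XModHom.comp_triv κ)
  have h3 : v = XModHom.triv zzXMod N := h1.trans h2.symm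
  have h4 := XModHom.f1_apply_congr h3 ((Multiplicative.ofAdd (1 : ℤ) : Multiplicative ℤ) : zzXMod.M)
  rw [hv] at h4
  have h5 : n ^ (1 : ℤ) = 1 := h4
  rwa [zpow_one] at h5

theorem kernel_inj_f2 {N T Q : XMod} {κ : XModHom N T} {α : XModHom T Q}
    (hk : XModHom.IsKernelOf κ α) {b : N.G} (hb : κ.f2 b = 1) : b = 1 := by
  set v : XModHom zgXMod N :=
    { f1 := 1
      f2 := zpowersHom N.G b
      comm_d := by
        intro m
        show N.d 1 = (zpowersHom N.G b) 1
        simp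
      equiv := by
        intro c m
        show (1 : N.M) = N.act (b ^ (Multiplicative.toAdd c : ℤ)) 1
        simp } with hv
  have hκv : XModHom.comp κ v = XModHom.triv zgXMod T := by
    apply XModHom.ext
    · apply MonoidHom.ext; intro m
      show κ.f1 1 = 1
      simp
    · apply MonoidHom.ext; intro m
      show κ.f2 (b ^ (Multiplicative.toAdd m : ℤ)) = 1
      rw [map_zpow, hb, one_zpow]
  obtain ⟨w, hw, hwuniq⟩ := hk.2 zgXMod (XModHom.triv zgXMod T) (XModHom.comp_triv α)
  have h3 : v = XModHom.triv zgXMod N :=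
    (hwuniq v hκv).trans (hwuniq _ (XModHom.comp_triv κ)).symm
  have h4 := XModHom.f2_apply_congr h3 ((Multiplicative.ofAdd (1 : ℤ) : Multiplicative ℤ) : zgXMod.G)
  rw [hv] at h4
  have h5 : b ^ (1 : ℤ) = 1 := h4
  rwa [zpow_one] at h5

theorem kernel_range_f1 {N T Q : XMod} {κ : XModHom N T} {α : XModHom T Q}
    (hk : XModHom.IsKernelOf κ α) {t : T.M} (ht : α.f1 t = 1) : ∃ n, κ.f1 n = t := by
  have hu : XModHom.comp α (kerIncl α) = XModHom.triv (kerXMod α) Q := by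
    apply XModHom.ext
    · apply MonoidHom.ext; intro x; exact x.2
    · apply MonoidHom.ext; intro x; exact x.2
  obtain ⟨v, hv, _⟩ := hk.2 (kerXMod α) (kerIncl α) hu
  exact ⟨v.f1 ⟨t, ht⟩, XModHom.f1_apply_congr hv ⟨t, ht⟩⟩

theorem kernel_range_f2 {N T Q : XMod} {κ : XModHom N T} {α : XModHom T Q}
    (hk : XModHom.IsKernelOf κ α) {t : T.G} (ht : α.f2 t = 1) : ∃ n, κ.f2 n = t := by
  have hu : XModHom.comp α (kerIncl α) = XModHom.triv (kerXMod α) Q := by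
    apply XModHom.ext
    · apply MonoidHom.ext; intro x; exact x.2
    · apply MonoidHom.ext; intro x; exact x.2
  obtain ⟨v, hv, _⟩ := hk.2 (kerXMod α) (kerIncl α) hu
  exact ⟨v.f2 ⟨t, ht⟩, XModHom.f2_apply_congr hv ⟨t, ht⟩⟩

theorem pbFst_comp_pbIn {N T Q Q' : XMod} (κ : XModHom N T) (α : XModHom T Q)
    (g : XModHom Q' Q) (h : XModHom.comp α κ = XModHom.triv N Q) :
    XModHom.comp (pbFst α g) (pbIn κ α g h) = κ :=
  XModHom.ext (MonoidHom.ext fun _ => rfl) (MonoidHom.ext fun _ => rfl)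

theorem pbSnd_comp_pbIn {N T Q Q' : XMod} (κ : XModHom N T) (α : XModHom T Q)
    (g : XModHom Q' Q) (h : XModHom.comp α κ = XModHom.triv N Q) :
    XModHom.comp (pbSnd α g) (pbIn κ α g h) = XModHom.triv N Q' :=
  XModHom.ext (MonoidHom.ext fun _ => rfl) (MonoidHom.ext fun _ => rfl)

/-- The pullback of a kernel is a kernel. -/
theorem pb_kernel {N T Q Q' : XMod} (κ : XModHom N T) (α : XModHom T Q)
    (g : XModHom Q' Q) (hk : XModHom.IsKernelOf κ α) :
    XModHom.IsKernelOf (pbIn κ α g hk.1) (pbSnd α g) := by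
  constructor
  · exact pbSnd_comp_pbIn κ α g hk.1
  · intro X u hu
    have hαu : XModHom.comp α (XModHom.comp (pbFst α g) u) = XModHom.triv X Q := by
      apply XModHom.ext
      · apply MonoidHom.ext; intro x
        show α.f1 ((u.f1 x).1.1) = 1
        have hmem : α.f1 ((u.f1 x).1.1) = g.f1 ((u.f1 x).1.2) := (u.f1 x).2
        have hx2 : (u.f1 x).1.2 = 1 := XModHom.f1_apply_congr hu x
        rw [hmem, hx2, map_one]
      · apply MonoidHom.ext; intro x
        show α.f2 ((u.f2 x).1.1) = 1
        have hmem : α.f2 ((u.f2 x).1.1) = g.f2 ((u.f2 x).1.2) := (u.f2 x).2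
        have hx2 : (u.f2 x).1.2 = 1 := XModHom.f2_apply_congr hu x
        rw [hmem, hx2, map_one]
    obtain ⟨v, hv, hvuniq⟩ := hk.2 X (XModHom.comp (pbFst α g) u) hαu
    refine ⟨v, ?_, ?_⟩
    · apply XModHom.ext
      · apply MonoidHom.ext; intro x
        apply Subtype.ext
        apply Prod.ext
        · exact XModHom.f1_apply_congr hv x
        · exact (XModHom.f1_apply_congr hu x).symm
      · apply MonoidHom.ext; intro x
        apply Subtype.ext
        apply Prod.ext
        · exact XModHom.f2_apply_congr hv x
        · exact (XModHom.f2_apply_congr hu x).symm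
    · intro v' hv'
      apply hvuniq
      rw [← hv', ← XModHom.comp_assoc, pbFst_comp_pbIn]

end Aux

section MainConstruction

variable (L : LocalizationFunctor) {T Q Q' : XMod} (α : XModHom T Q) (g : XModHom Q' Q)

/-- The comparison morphism `T ×_Q Q' → L T ×_{L Q} Q'`. -/
def locCmp : XModHom (pbXMod α g) (pbXMod (L.map α) (XModHom.comp (L.ell Q) g)) where
  f1 :=
    { toFun := fun w => ⟨((L.ell T).f1 w.1.1, w.1.2), by
        show (L.map α).f1 ((L.ell T).f1 w.1.1) = (L.ell Q).f1 (g.f1 w.1.2)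
        have hnat : (L.ell Q).f1 (α.f1 w.1.1) = (L.map α).f1 ((L.ell T).f1 w.1.1) :=
          XModHom.f1_apply_congr (L.natural α) w.1.1
        rw [← hnat, w.2]⟩
      map_one' := by
        apply Subtype.ext
        apply Prod.ext <;> (try simp) <;> first | rfl | exact map_one _
      map_mul' := by
        intro a b
        apply Subtype.ext
        apply Prod.ext
        · exact map_mul (L.ell T).f1 a.1.1 b.1.1
        · rfl }
  f2 :=
    { toFun := fun w => ⟨((L.ell T).f2 w.1.1, w.1.2), by
        show (L.map α).f2 ((L.ell T).f2 w.1.1) = (L.ell Q).f2 (g.f2 w.1.2)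
        have hnat : (L.ell Q).f2 (α.f2 w.1.1) = (L.map α).f2 ((L.ell T).f2 w.1.1) :=
          XModHom.f2_apply_congr (L.natural α) w.1.1
        rw [← hnat, w.2]⟩
      map_one' := by
        apply Subtype.ext
        apply Prod.ext <;> (try simp) <;> first | rfl | exact map_one _
      map_mul' := by
        intro a b
        apply Subtype.ext
        apply Prod.ext
        · exact map_mul (L.ell T).f2 a.1.1 b.1.1
        · rfl }
  comm_d := by
    intro w
    apply Subtype.ext
    apply Prod.ext
    · exact (L.ell T).comm_d _
    · rfl
  equiv := by
    intro b w
    apply Subtype.ext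
    apply Prod.ext
    · exact (L.ell T).equiv _ _
    · rfl

end MainConstruction

/-- For a regular-epi localization functor `L`, the pullback of
an `L`-flat short exact sequence along any morphism `g : Q' → Q` admits a
fiberwise localization. -/
theorem pullback_admits_fiberwise (L : LocalizationFunctor) (hL : L.RegEpiLoc)
    {N T Q : XMod} (κ : XModHom N T) (α : XModHom T Q)
    (hse : ShortExact κ α) (hflat : L.LFlat κ α)
    {Q' : XMod} (g : XModHom Q' Q) :
    L.AdmitsFiberwise (pbIn κ α g hse.1.1) (pbSnd α g) := by
  classical
  set g' : XModHom Q' (L.obj Q) := XModHom.comp (L.ell Q) g with hg'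
  set e : XModHom (pbXMod α g) (pbXMod (L.map α) g') := locCmp L α g with he
  -- surjectivity of the components of `e`
  have he1 : Function.Surjective e.f1 := by
    intro y
    obtain ⟨t₀, ht₀⟩ := (hL T).1 y.1.1
    have hw : (L.ell Q).f1 ((α.f1 t₀)⁻¹ * g.f1 y.1.2) = 1 := by
      rw [map_mul, map_inv]
      have h1 : (L.ell Q).f1 (α.f1 t₀) = (L.map α).f1 ((L.ell T).f1 t₀) :=
        XModHom.f1_apply_congr (L.natural α) t₀
      have h2 : (L.map α).f1 y.1.1 = (L.ell Q).f1 (g.f1 y.1.2) := y.2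
      rw [h1, ht₀, h2, inv_mul_cancel]
    -- lift the kernel element `w` to a kernel element of `ℓT`
    obtain ⟨t, ht⟩ := hse.2.1 ((α.f1 t₀)⁻¹ * g.f1 y.1.2)
    have htk : (L.map α).f1 ((L.ell T).f1 t) = 1 := by
      have h1 : (L.ell Q).f1 (α.f1 t) = (L.map α).f1 ((L.ell T).f1 t) :=
        XModHom.f1_apply_congr (L.natural α) t
      rw [← h1, ht, hw]
    obtain ⟨m, hm⟩ := kernel_range_f1 hflat.1 htk
    obtain ⟨n, hn⟩ := (hL N).1 m
    have hκn : (L.ell T).f1 (κ.f1 n) = (L.ell T).f1 t := by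
      have h1 : (L.ell T).f1 (κ.f1 n) = (L.map κ).f1 ((L.ell N).f1 n) :=
        XModHom.f1_apply_congr (L.natural κ) n
      rw [h1, hn, hm]
    have hακn : α.f1 (κ.f1 n) = 1 := XModHom.f1_apply_congr hse.1.1 n
    have hmem : α.f1 (t₀ * ((κ.f1 n)⁻¹ * t)) = g.f1 y.1.2 := by
      simp only [map_mul, map_inv, hακn, ht, inv_one, one_mul]
      rw [mul_inv_cancel_left]
    refine ⟨⟨(t₀ * ((κ.f1 n)⁻¹ * t), y.1.2), hmem⟩, ?_⟩
    apply Subtype.ext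
    apply Prod.ext
    · show (L.ell T).f1 (t₀ * ((κ.f1 n)⁻¹ * t)) = y.1.1
      rw [map_mul, map_mul, map_inv, hκn, inv_mul_cancel, mul_one, ht₀]
    · rfl
  have he2 : Function.Surjective e.f2 := by
    intro y
    obtain ⟨t₀, ht₀⟩ := (hL T).2 y.1.1
    have hw : (L.ell Q).f2 ((α.f2 t₀)⁻¹ * g.f2 y.1.2) = 1 := by
      rw [map_mul, map_inv]
      have h1 : (L.ell Q).f2 (α.f2 t₀) = (L.map α).f2 ((L.ell T).f2 t₀) :=
        XModHom.f2_apply_congr (L.natural α) t₀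
      have h2 : (L.map α).f2 y.1.1 = (L.ell Q).f2 (g.f2 y.1.2) := y.2
      rw [h1, ht₀, h2, inv_mul_cancel]
    obtain ⟨t, ht⟩ := hse.2.2 ((α.f2 t₀)⁻¹ * g.f2 y.1.2)
    have htk : (L.map α).f2 ((L.ell T).f2 t) = 1 := by
      have h1 : (L.ell Q).f2 (α.f2 t) = (L.map α).f2 ((L.ell T).f2 t) :=
        XModHom.f2_apply_congr (L.natural α) t
      rw [← h1, ht, hw]
    obtain ⟨m, hm⟩ := kernel_range_f2 hflat.1 htk
    obtain ⟨n, hn⟩ := (hL N).2 m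
    have hκn : (L.ell T).f2 (κ.f2 n) = (L.ell T).f2 t := by
      have h1 : (L.ell T).f2 (κ.f2 n) = (L.map κ).f2 ((L.ell N).f2 n) :=
        XModHom.f2_apply_congr (L.natural κ) n
      rw [h1, hn, hm]
    have hακn : α.f2 (κ.f2 n) = 1 := XModHom.f2_apply_congr hse.1.1 n
    have hmem : α.f2 (t₀ * ((κ.f2 n)⁻¹ * t)) = g.f2 y.1.2 := by
      simp only [map_mul, map_inv, hακn, ht, inv_one, one_mul]
      rw [mul_inv_cancel_left]
    refine ⟨⟨(t₀ * ((κ.f2 n)⁻¹ * t), y.1.2), hmem⟩, ?_⟩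
    apply Subtype.ext
    apply Prod.ext
    · show (L.ell T).f2 (t₀ * ((κ.f2 n)⁻¹ * t)) = y.1.1
      rw [map_mul, map_mul, map_inv, hκn, inv_mul_cancel, mul_one, ht₀]
    · rfl
  -- kernel of `e` is killed by the coaugmentation of the pullback
  have hker1 : e.f1.ker ≤ (L.ell (pbXMod α g)).f1.ker := by
    intro x hx
    have hx' : ((L.ell T).f1 x.1.1, x.1.2) = ((1 : (L.obj T).M), (1 : Q'.M)) :=
      congrArg Subtype.val hx
    have h1 : (L.ell T).f1 x.1.1 = 1 := congrArg Prod.fst hx'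
    have h2 : x.1.2 = 1 := congrArg Prod.snd hx'
    have hα : α.f1 x.1.1 = 1 := by
      have hmem : α.f1 x.1.1 = g.f1 x.1.2 := x.2
      rw [hmem, h2, map_one]
    obtain ⟨n, hn⟩ := kernel_range_f1 hse.1 hα
    have hℓn : (L.ell N).f1 n = 1 := by
      apply kernel_inj_f1 hflat.1
      have hnat : (L.ell T).f1 (κ.f1 n) = (L.map κ).f1 ((L.ell N).f1 n) :=
        XModHom.f1_apply_congr (L.natural κ) n
      rw [← hnat, hn, h1]
    have hxeq : (pbIn κ α g hse.1.1).f1 n = x := by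
      apply Subtype.ext
      apply Prod.ext
      · exact hn
      · exact h2.symm
    show (L.ell (pbXMod α g)).f1 x = 1
    rw [← hxeq]
    have hnat : (L.ell (pbXMod α g)).f1 ((pbIn κ α g hse.1.1).f1 n)
        = (L.map (pbIn κ α g hse.1.1)).f1 ((L.ell N).f1 n) :=
      XModHom.f1_apply_congr (L.natural (pbIn κ α g hse.1.1)) n
    rw [hnat, hℓn, map_one]
  have hker2 : e.f2.ker ≤ (L.ell (pbXMod α g)).f2.ker := by
    intro x hx
    have hx' : ((L.ell T).f2 x.1.1, x.1.2) = ((1 : (L.obj T).G), (1 : Q'.G)) :=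
      congrArg Subtype.val hx
    have h1 : (L.ell T).f2 x.1.1 = 1 := congrArg Prod.fst hx'
    have h2 : x.1.2 = 1 := congrArg Prod.snd hx'
    have hα : α.f2 x.1.1 = 1 := by
      have hmem : α.f2 x.1.1 = g.f2 x.1.2 := x.2
      rw [hmem, h2, map_one]
    obtain ⟨n, hn⟩ := kernel_range_f2 hse.1 hα
    have hℓn : (L.ell N).f2 n = 1 := by
      apply kernel_inj_f2 hflat.1
      have hnat : (L.ell T).f2 (κ.f2 n) = (L.map κ).f2 ((L.ell N).f2 n) :=
        XModHom.f2_apply_congr (L.natural κ) n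
      rw [← hnat, hn, h1]
    have hxeq : (pbIn κ α g hse.1.1).f2 n = x := by
      apply Subtype.ext
      apply Prod.ext
      · exact hn
      · exact h2.symm
    show (L.ell (pbXMod α g)).f2 x = 1
    rw [← hxeq]
    have hnat : (L.ell (pbXMod α g)).f2 ((pbIn κ α g hse.1.1).f2 n)
        = (L.map (pbIn κ α g hse.1.1)).f2 ((L.ell N).f2 n) :=
      XModHom.f2_apply_congr (L.natural (pbIn κ α g hse.1.1)) n
    rw [hnat, hℓn, map_one]
  -- build a retraction-style comparison
  obtain ⟨ψ, hψ⟩ := lift_of_surjective e he1 he2 (L.ell (pbXMod α g)) hker1 hker2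
  obtain ⟨ψ', hψ'⟩ := exists_factor L ψ
  have hiso : XModHom.IsIso (L.map e) := by
    refine ⟨ψ', ?_, ?_⟩
    · apply eq_of_comp_ell L
      rw [XModHom.comp_assoc, ← L.natural e, ← XModHom.comp_assoc, hψ', hψ,
        XModHom.id_comp]
    · have hLeψ : XModHom.comp (L.map e) ψ = L.ell (pbXMod (L.map α) g') := by
        apply XModHom.cancel_of_regEpi (⟨he1, he2⟩ : XModHom.RegEpi e)
        rw [XModHom.comp_assoc, hψ, ← L.natural e]
      apply eq_of_comp_ell L
      rw [XModHom.comp_assoc, hψ', hLeψ, XModHom.id_comp]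
  refine ⟨pbXMod (L.map α) g', pbIn (L.map κ) (L.map α) g' hflat.1.1,
    pbSnd (L.map α) g', e, ⟨pb_kernel _ _ _ hflat.1, ?_, ?_⟩, hiso, ?_, ?_⟩
  · -- surjectivity of the projection, level 1
    intro q'
    obtain ⟨x, hx⟩ := hflat.2.1 (g'.f1 q')
    exact ⟨⟨(x, q'), hx⟩, rfl⟩
  · -- surjectivity of the projection, level 2
    intro q'
    obtain ⟨x, hx⟩ := hflat.2.2 (g'.f2 q')
    exact ⟨⟨(x, q'), hx⟩, rfl⟩
  · -- compatibility with the kernels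
    apply XModHom.ext
    · apply MonoidHom.ext; intro n
      apply Subtype.ext
      apply Prod.ext
      · exact XModHom.f1_apply_congr (L.natural κ) n
      · rfl
    · apply MonoidHom.ext; intro n
      apply Subtype.ext
      apply Prod.ext
      · exact XModHom.f2_apply_congr (L.natural κ) n
      · rfl
  · -- compatibility with the projections
    exact XModHom.ext (MonoidHom.ext fun _ => rfl) (MonoidHom.ext fun _ => rfl)
end

section
/- The nullification functor P_{Xℤ} : XMod → XMod, defined on objects by (N₁, N₂, ∂) ↦ (N₁/[N₂,N₁], 1) with coaugmentation given by the canonical quotient map in level 1 and the trivial map in level 2, is admissible for the class of regular epimorphisms. -/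
set_option linter.unusedVariables false

section Aux

theorem XModHom.comp_assoc_s12 {A B C D : XMod} (h : XModHom C D) (g : XModHom B C)
    (f : XModHom A B) :
    XModHom.comp (XModHom.comp h g) f = XModHom.comp h (XModHom.comp g f) := rfl

theorem XModHom.id_comp_s12 {A B : XMod} (f : XModHom A B) :
    XModHom.comp (XModHom.id B) f = f := rfl

theorem XModHom.comp_id_s12 {A B : XMod} (f : XModHom A B) :
    XModHom.comp f (XModHom.id A) = f := rfl

/-- A componentwise bijective morphism of crossed modules is an isomorphism. -/
theorem isIso_of_bijective {A B : XMod} (f : XModHom A B)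
    (h1 : Function.Bijective f.f1) (h2 : Function.Bijective f.f2) :
    XModHom.IsIso f := by
  let e1 : A.M ≃* B.M := MulEquiv.ofBijective f.f1 h1
  let e2 : A.G ≃* B.G := MulEquiv.ofBijective f.f2 h2
  have he1 : ∀ a, e1.symm (f.f1 a) = a := fun a => e1.symm_apply_apply a
  have he2 : ∀ a, e2.symm (f.f2 a) = a := fun a => e2.symm_apply_apply a
  have he1' : ∀ b, f.f1 (e1.symm b) = b := fun b => e1.apply_symm_apply b
  have he2' : ∀ b, f.f2 (e2.symm b) = b := fun b => e2.apply_symm_apply b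
  refine ⟨⟨e1.symm.toMonoidHom, e2.symm.toMonoidHom, ?_, ?_⟩, ?_, ?_⟩
  · intro b
    apply h2.1
    show f.f2 (A.d (e1.symm b)) = f.f2 (e2.symm (B.d b))
    rw [he2', ← f.comm_d, he1']
  · intro b n
    apply h1.1
    show f.f1 (e1.symm (B.act b n)) = f.f1 (A.act (e2.symm b) (e1.symm n))
    rw [he1', f.equiv, he2', he1']
  · refine XModHom.ext ?_ ?_ <;> ext a
    · exact he1 a
    · exact he2 a
  · refine XModHom.ext ?_ ?_ <;> ext a
    · exact he1' a
    · exact he2' a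

/-- A commuting square whose left and bottom maps are isomorphisms is a
pullback square. -/
theorem isPullbackSquare_of_iso {P X Y Z : XMod} (p1 : XModHom P X) (p2 : XModHom P Y)
    (f : XModHom X Z) (h : XModHom Y Z)
    (hcomm : XModHom.comp f p1 = XModHom.comp h p2)
    (hp1 : XModHom.IsIso p1) (hh : XModHom.IsIso h) :
    IsPullbackSquare p1 p2 f h := by
  obtain ⟨q, hq1, hq2⟩ := hp1
  obtain ⟨k, hk1, hk2⟩ := hh
  refine ⟨hcomm, ?_⟩
  intro W u v huv
  refine ⟨XModHom.comp q u, ⟨?_, ?_⟩, ?_⟩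
  · rw [← XModHom.comp_assoc_s12, hq2, XModHom.id_comp_s12]
  · have : XModHom.comp h (XModHom.comp p2 (XModHom.comp q u)) = XModHom.comp h v := by
      rw [← XModHom.comp_assoc_s12, ← hcomm, XModHom.comp_assoc_s12, ← XModHom.comp_assoc_s12 p1,
        hq2, XModHom.id_comp_s12, huv]
    calc XModHom.comp p2 (XModHom.comp q u)
        = XModHom.comp (XModHom.comp k h) (XModHom.comp p2 (XModHom.comp q u)) := by
          rw [hk1, XModHom.id_comp_s12]
      _ = XModHom.comp k (XModHom.comp h v) := by rw [XModHom.comp_assoc_s12, this]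
      _ = v := by rw [← XModHom.comp_assoc_s12, hk1, XModHom.id_comp_s12]
  · intro w ⟨hw1, _⟩
    rw [← hw1, ← XModHom.comp_assoc_s12, hq1, XModHom.id_comp_s12]

end Aux

/-- In a localized crossed module the level-2 group is trivial, hence the
subgroup `[N₂,N₁]` is trivial. -/
theorem actCommutator_eq_bot_of_trivG (X : XMod) (hX : ∀ b : X.G, b = 1) :
    actCommutator X = ⊥ := by
  apply le_antisymm
  · apply (Subgroup.closure_le _).mpr
    rintro x ⟨b, t, hx⟩
    have hb : b = 1 := hX b
    subst hb
    simp only [map_one, Subgroup.coe_bot, Set.mem_singleton_iff]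
    rw [hx]
    simp
  · exact bot_le

theorem pb_one_mem_actCommutator (P : LocalizationFunctor)
    (hP : ∀ N : XMod,
      (∀ b : (P.obj N).G, b = 1) ∧
      Function.Surjective (P.ell N).f1 ∧
      (P.ell N).f1.ker = actCommutator N)
    {T Q : XMod} (α : XModHom (P.obj T) (P.obj Q))
    (hα : Function.Surjective α.f1) (q : Q.M) (hq : q ∈ actCommutator Q) :
    ∀ h : ((1 : (P.obj T).M), q) ∈ pbM α (P.ell Q),
      (⟨((1 : (P.obj T).M), q), h⟩ : ↥(pbM α (P.ell Q))) ∈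
        actCommutator (pbXMod α (P.ell Q)) := by
  have hker : ∀ {x : Q.M}, x ∈ actCommutator Q → (P.ell Q).f1 x = 1 := by
    intro x hx
    rw [← (hP Q).2.2] at hx
    exact hx
  have hmem : ∀ {x : Q.M}, x ∈ actCommutator Q →
      ((1 : (P.obj T).M), x) ∈ pbM α (P.ell Q) := by
    intro x hx
    show α.f1 1 = (P.ell Q).f1 x
    rw [map_one, hker hx]
  refine Subgroup.closure_induction
    (p := fun q hq => ∀ h : ((1 : (P.obj T).M), q) ∈ pbM α (P.ell Q),
      (⟨((1 : (P.obj T).M), q), h⟩ : ↥(pbM α (P.ell Q))) ∈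
        actCommutator (pbXMod α (P.ell Q))) ?_ ?_ ?_ ?_ hq
  · rintro x ⟨c, t, hx⟩ h
    obtain ⟨t', ht'⟩ := hα ((P.ell Q).f1 t)
    have hwt : ((t', t) : (P.obj T).M × Q.M) ∈ pbM α (P.ell Q) := ht'
    have hwb : (((1 : (P.obj T).G), c) : (P.obj T).G × Q.G) ∈ pbG α (P.ell Q) := by
      show α.f2 1 = (P.ell Q).f2 c
      rw [map_one]
      exact ((hP Q).1 _).symm
    apply Subgroup.subset_closure
    refine ⟨⟨((1 : (P.obj T).G), c), hwb⟩, ⟨((t', t)), hwt⟩, ?_⟩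
    apply Subtype.ext
    apply Prod.ext
    · show (1 : (P.obj T).M) = (P.obj T).act 1 t' * t'⁻¹
      simp
    · exact hx
  · intro h
    have : (⟨((1 : (P.obj T).M), (1 : Q.M)), h⟩ : ↥(pbM α (P.ell Q))) = 1 :=
      Subtype.ext rfl
    rw [this]
    exact one_mem _
  · intro x y hx hy px py h
    have hx' := hmem hx
    have hy' := hmem hy
    have : (⟨((1 : (P.obj T).M), x * y), h⟩ : ↥(pbM α (P.ell Q))) =
        ⟨((1 : (P.obj T).M), x), hx'⟩ * ⟨((1 : (P.obj T).M), y), hy'⟩ := by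
      apply Subtype.ext
      apply Prod.ext
      · exact (mul_one 1).symm
      · rfl
    rw [this]
    exact mul_mem (px hx') (py hy')
  · intro x hx px h
    have hx' := hmem hx
    have : (⟨((1 : (P.obj T).M), x⁻¹), h⟩ : ↥(pbM α (P.ell Q))) =
        (⟨((1 : (P.obj T).M), x), hx'⟩)⁻¹ := by
      apply Subtype.ext
      apply Prod.ext
      · exact inv_one.symm
      · rfl
    rw [this]
    exact inv_mem (px hx')

/-- The nullification functor `P_{Xℤ}` on `XMod`, sending
`(N₁, N₂, ∂)` to `(N₁/[N₂,N₁], 1)` (characterized here by its coaugmentation: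
the level-2 group of `P N` is trivial and the level-1 component of the
coaugmentation is the canonical quotient map, i.e. surjective with kernel
`[N₂,N₁]`), is admissible for the class of regular epimorphisms. -/
theorem PXZ_admissible (P : LocalizationFunctor)
    (hP : ∀ N : XMod,
      (∀ b : (P.obj N).G, b = 1) ∧
      Function.Surjective (P.ell N).f1 ∧
      (P.ell N).f1.ker = actCommutator N) :
    P.Admissible := by
  intro T Q α hreg
  have hcomm : XModHom.comp α (pbFst α (P.ell Q)) =
      XModHom.comp (P.ell Q) (pbSnd α (P.ell Q)) := by
    refine XModHom.ext ?_ ?_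
    · ext w; exact w.2
    · ext w; exact w.2
  have hcommP : XModHom.comp (P.map α) (P.map (pbFst α (P.ell Q))) =
      XModHom.comp (P.map (P.ell Q)) (P.map (pbSnd α (P.ell Q))) := by
    rw [← P.map_comp, hcomm, P.map_comp]
  refine isPullbackSquare_of_iso _ _ _ _ hcommP ?_ (P.iso_map_ell Q)
  -- it remains to show that `P.map (pbFst α (P.ell Q))` is an isomorphism
  set W := pbXMod α (P.ell Q) with hW
  set π := pbFst α (P.ell Q) with hπ
  have hnat : ∀ w : W.M,
      (P.map π).f1 ((P.ell W).f1 w) = (P.ell (P.obj T)).f1 (π.f1 w) := by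
    intro w
    have := congrArg XModHom.f1 (P.natural π)
    exact (DFunLike.congr_fun this w).symm
  apply isIso_of_bijective
  · constructor
    · -- injectivity of level-1 component
      rw [injective_iff_map_eq_one]
      intro x hx
      obtain ⟨w, hw⟩ := (hP W).2.1 x
      subst hw
      rw [hnat] at hx
      have hker1 : π.f1 w ∈ (P.ell (P.obj T)).f1.ker := hx
      rw [(hP (P.obj T)).2.2, actCommutator_eq_bot_of_trivG _ (hP T).1] at hker1
      have hfst : w.1.1 = 1 := hker1
      have hsnd : w.1.2 ∈ actCommutator Q := by
        rw [← (hP Q).2.2]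
        show (P.ell Q).f1 w.1.2 = 1
        have := w.2
        rw [← this, hfst, map_one]
      have hmem : ((1 : (P.obj T).M), w.1.2) ∈ pbM α (P.ell Q) := by
        show α.f1 1 = (P.ell Q).f1 w.1.2
        have := w.2
        rw [← this, hfst]
      have hw' : w = ⟨((1 : (P.obj T).M), w.1.2), hmem⟩ := by
        apply Subtype.ext
        apply Prod.ext
        · exact hfst
        · rfl
      have : w ∈ actCommutator W := by
        rw [hw']
        exact pb_one_mem_actCommutator P hP α hreg.1 w.1.2 hsnd hmem
      rw [← (hP W).2.2] at this
      exact this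
    · -- surjectivity of level-1 component
      intro y
      obtain ⟨t, ht⟩ := (hP (P.obj T)).2.1 y
      obtain ⟨q, hq⟩ := (hP Q).2.1 (α.f1 t)
      have hmem : ((t, q) : (P.obj T).M × Q.M) ∈ pbM α (P.ell Q) := hq.symm
      refine ⟨(P.ell W).f1 ⟨(t, q), hmem⟩, ?_⟩
      exact (hnat (⟨(t, q), hmem⟩ : ↥(pbM α (P.ell Q)))).trans ht
  · constructor
    · intro a b _
      rw [(hP W).1 a, (hP W).1 b]
    · intro y
      refine ⟨1, ?_⟩
      rw [map_one]
      exact ((hP (P.obj T)).1 y).symm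
end
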